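/- For every r ≥ 2, there exists a simple bipartite planar graph in which one part has 4r vertices all of degree 3 and the other part has 3r vertices all of degree 4. -/

import Mathlib

/-- A topological plane embedding (drawing) of a simple graph: vertices are points
of the plane, edges are injective continuous arcs meeting only at common endpoints. -/
structure PlaneEmb {V : Type} (G : SimpleGraph V) where
  pos : V → ℝ × ℝ
  pos_inj : Function.Injective pos
  arc : ∀ ⦃u v : V⦄, G.Adj u v → unitInterval → ℝ × ℝ
  arc_cont : ∀ ⦃u v : V⦄ (h : G.Adj u v), Continuous (arc h)
  arc_inj : ∀ ⦃u v : V⦄ (h : G.Adj u v), Function.Injective (arc h)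
  arc_zero : ∀ ⦃u v : V⦄ (h : G.Adj u v), arc h 0 = pos u
  arc_one : ∀ ⦃u v : V⦄ (h : G.Adj u v), arc h 1 = pos v
  arc_symm : ∀ ⦃u v : V⦄ (h : G.Adj u v) (t : unitInterval),
    arc h.symm (unitInterval.symm t) = arc h t
  arc_vertex : ∀ ⦃u v : V⦄ (h : G.Adj u v) (t : unitInterval),
    (∃ w, arc h t = pos w) → t = 0 ∨ t = 1
  arc_disj : ∀ ⦃u v x y : V⦄ (h : G.Adj u v) (h' : G.Adj x y),
    s(u, v) ≠ s(x, y) → ∀ t₁ t₂ : unitInterval, arc h t₁ = arc h' t₂ → ∃ w, arc h t₁ = pos w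

/-- The pair `(a^p | b^q)` is planar graphic: there is a simple bipartite planar graph
one of whose parts has `p` vertices, all of degree `a`, and the other part has `q`
vertices, all of degree `b`. -/
def PlanarPair (a p b q : ℕ) : Prop :=
  ∃ (V : Type) (_ : Finite V) (G : SimpleGraph V) (A B : Set V),
    Disjoint A B ∧ A ∪ B = Set.univ ∧ A.ncard = p ∧ B.ncard = q ∧
    (∀ ⦃u v⦄, G.Adj u v → ((u ∈ A ∧ v ∈ B) ∨ (u ∈ B ∧ v ∈ A))) ∧
    (∀ v ∈ A, (G.neighborSet v).ncard = a) ∧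
    (∀ v ∈ B, (G.neighborSet v).ncard = b) ∧
    Nonempty (PlaneEmb G)


namespace PlanarAux

/-- parametrized straight segment from `P` to `Q`. -/
def seg (P Q : ℝ × ℝ) (t : ℝ) : ℝ × ℝ := ((1-t) * P.1 + t * Q.1, (1-t) * P.2 + t * Q.2)

/-- orientation determinant over ℝ. -/
def or3 (P Q R : ℝ × ℝ) : ℝ := (Q.1 - P.1) * (R.2 - P.2) - (Q.2 - P.2) * (R.1 - P.1)

/-- orientation determinant over ℤ. -/
def Zor (P Q R : ℤ × ℤ) : ℤ := (Q.1 - P.1) * (R.2 - P.2) - (Q.2 - P.2) * (R.1 - P.1)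

def i2r (P : ℤ × ℤ) : ℝ × ℝ := ((P.1 : ℝ), (P.2 : ℝ))

lemma i2r_inj : Function.Injective i2r := by
  rintro ⟨a, b⟩ ⟨c, d⟩ h
  simp only [i2r, Prod.mk.injEq] at h
  exact Prod.ext (by exact_mod_cast h.1) (by exact_mod_cast h.2)

lemma or3_i2r (P Q R : ℤ × ℤ) : or3 (i2r P) (i2r Q) (i2r R) = (Zor P Q R : ℝ) := by
  simp only [or3, Zor, i2r]; push_cast; ring

lemma or3_seg (P Q R S : ℝ × ℝ) (t : ℝ) :
    or3 P Q (seg R S t) = (1-t) * or3 P Q R + t * or3 P Q S := by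
  simp only [or3, seg]; ring

lemma or3_self_left (P Q : ℝ × ℝ) : or3 P Q P = 0 := by simp only [or3]; ring

lemma or3_self_right (P Q : ℝ × ℝ) : or3 P Q Q = 0 := by simp only [or3]; ring

lemma or3_seg_self (P Q : ℝ × ℝ) (t : ℝ) : or3 P Q (seg P Q t) = 0 := by
  rw [or3_seg, or3_self_left, or3_self_right]; ring

lemma seg_zero (P Q : ℝ × ℝ) : seg P Q 0 = P := by simp [seg]

lemma seg_one (P Q : ℝ × ℝ) : seg P Q 1 = Q := by simp [seg]

lemma seg_flip (P Q : ℝ × ℝ) (t : ℝ) : seg Q P (1-t) = seg P Q t := by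
  simp only [seg, Prod.mk.injEq]; constructor <;> ring

lemma seg_inj {P Q : ℝ × ℝ} (h : P ≠ Q) {s t : ℝ} (hst : seg P Q s = seg P Q t) : s = t := by
  have h1 : (s - t) * (Q.1 - P.1) = 0 := by
    have := congrArg Prod.fst hst; simp only [seg] at this; linear_combination this
  have h2 : (s - t) * (Q.2 - P.2) = 0 := by
    have := congrArg Prod.snd hst; simp only [seg] at this; linear_combination this
  rcases mul_eq_zero.mp h1 with h1' | h1'
  · linarith
  rcases mul_eq_zero.mp h2 with h2' | h2'
  · linarith
  · exact absurd (Prod.ext (by linarith) (by linarith)).symm h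

lemma comb_ne_zero {a b t : ℝ} (ht0 : 0 ≤ t) (ht1 : t ≤ 1) (hab : 0 < a * b) :
    (1-t) * a + t * b ≠ 0 := by
  have key : ∀ x y : ℝ, 0 < x → 0 < y → 0 < (1-t) * x + t * y := by
    intro x y hx hy
    rcases lt_or_eq_of_le ht1 with h1 | h1
    · have : 0 < (1-t) * x := mul_pos (by linarith) hx
      have : 0 ≤ t * y := mul_nonneg ht0 hy.le
      linarith
    · subst h1; simpa using hy
  intro h
  rcases mul_pos_iff.mp hab with ⟨ha, hb⟩ | ⟨ha, hb⟩
  · exact (key a b ha hb).ne' h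
  · have := key (-a) (-b) (by linarith) (by linarith)
    nlinarith

/-- if the segment `X Y` meets the segment `P Q` and `X` is on line `P Q` but `Y` is not,
the meeting point is `X`. -/
lemma seg_meet {P Q X Y : ℝ × ℝ} {s t : ℝ}
    (heq : seg P Q s = seg X Y t) (hX : or3 P Q X = 0) (hY : or3 P Q Y ≠ 0) :
    seg X Y t = X := by
  have h0 : or3 P Q (seg X Y t) = 0 := by rw [← heq]; exact or3_seg_self P Q s
  rw [or3_seg, hX] at h0
  have ht : t = 0 := by
    rcases mul_eq_zero.mp (show t * or3 P Q Y = 0 by linarith) with h | h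
    · exact h
    · exact absurd h hY
  rw [ht, seg_zero]

section Cert

variable {n : ℕ}

/-- the graph determined by an edge list. -/
def certGraph (E : List (Fin n × Fin n)) : SimpleGraph (Fin n) where
  Adj u v := u ≠ v ∧ ((u, v) ∈ E ∨ (v, u) ∈ E)
  symm := ⟨by rintro u v ⟨h1, h2⟩; exact ⟨h1.symm, h2.symm⟩⟩
  loopless := ⟨fun u h => h.1 rfl⟩

instance (E : List (Fin n × Fin n)) : DecidableRel (certGraph E).Adj :=
  fun _ _ => inferInstanceAs (Decidable (_ ∧ _))

lemma zor_cast_ne {P Q R : ℤ × ℤ} (h : Zor P Q R ≠ 0) :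
    or3 (i2r P) (i2r Q) (i2r R) ≠ 0 := by rw [or3_i2r]; exact_mod_cast h

lemma zor_cast_pos {P Q R P' Q' R' : ℤ × ℤ} (h : 0 < Zor P Q R * Zor P' Q' R') :
    0 < or3 (i2r P) (i2r Q) (i2r R) * or3 (i2r P') (i2r Q') (i2r R') := by
  rw [or3_i2r, or3_i2r]; exact_mod_cast h

theorem cert_planarPair (a b p q : ℕ) (pos : Fin n → ℤ × ℤ) (E : List (Fin n × Fin n))
    (inA : Fin n → Bool)
    (hinj : ∀ u v : Fin n, pos u = pos v → u = v)
    (hswap : ∀ e ∈ E, (e.2, e.1) ∈ E)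
    (hne : ∀ e ∈ E, e.1 ≠ e.2)
    (hbip : ∀ e ∈ E, inA e.1 ≠ inA e.2)
    (hgen : ∀ e ∈ E, ∀ w : Fin n, w ≠ e.1 → w ≠ e.2 →
      Zor (pos e.1) (pos e.2) (pos w) ≠ 0)
    (hsep : ∀ e ∈ E, ∀ f ∈ E, e.1 ≠ f.1 → e.1 ≠ f.2 → e.2 ≠ f.1 → e.2 ≠ f.2 →
      0 < Zor (pos e.1) (pos e.2) (pos f.1) * Zor (pos e.1) (pos e.2) (pos f.2) ∨
      0 < Zor (pos f.1) (pos f.2) (pos e.1) * Zor (pos f.1) (pos f.2) (pos e.2))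
    (hA : (Finset.univ.filter fun v : Fin n => inA v = true).card = p)
    (hB : (Finset.univ.filter fun v : Fin n => inA v = false).card = q)
    (hdegA : ∀ v : Fin n, inA v = true → (Finset.univ.filter fun w => (v, w) ∈ E).card = a)
    (hdegB : ∀ v : Fin n, inA v = false → (Finset.univ.filter fun w => (v, w) ∈ E).card = b) :
    PlanarPair a p b q := by
  have adj_mem : ∀ {u v : Fin n}, (certGraph E).Adj u v → (u, v) ∈ E := by
    rintro u v ⟨-, h | h⟩
    · exact h
    · exact hswap _ h
  have nbr : ∀ v : Fin n,
      (certGraph E).neighborSet v = ↑(Finset.univ.filter fun w => (v, w) ∈ E) := by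
    intro v; ext w
    simp only [SimpleGraph.mem_neighborSet, Finset.coe_filter, Set.mem_setOf_eq,
      Finset.mem_univ, true_and]
    constructor
    · exact fun h => adj_mem h
    · intro h; exact ⟨hne _ h, Or.inl h⟩
  set P : Fin n → ℝ × ℝ := fun v => i2r (pos v) with hP
  have Pinj : ∀ {u v : Fin n}, P u = P v → u = v := fun h => hinj _ _ (i2r_inj h)
  refine ⟨Fin n, inferInstance, certGraph E,
    {v : Fin n | inA v = true}, {v : Fin n | inA v = false}, ?_, ?_, ?_, ?_, ?_, ?_, ?_, ?_⟩
  · rw [Set.disjoint_left]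
    intro v hv hv'
    simp only [Set.mem_setOf_eq] at hv hv'
    rw [hv] at hv'; exact Bool.noConfusion hv'
  · ext v; simp only [Set.mem_union, Set.mem_setOf_eq, Set.mem_univ, iff_true]
    cases inA v
    · right; rfl
    · left; rfl
  · have : {v : Fin n | inA v = true} = ↑(Finset.univ.filter fun v : Fin n => inA v = true) := by
      ext v; simp
    rw [this, Set.ncard_coe_finset, hA]
  · have : {v : Fin n | inA v = false} = ↑(Finset.univ.filter fun v : Fin n => inA v = false) := by
      ext v; simp
    rw [this, Set.ncard_coe_finset, hB]
  · intro u v h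
    have hb := hbip (u, v) (adj_mem h)
    simp only [Set.mem_setOf_eq]
    cases hu : inA u
    · right; rw [hu] at hb; exact ⟨rfl, by revert hb; cases inA v <;> simp⟩
    · left; rw [hu] at hb; exact ⟨rfl, by revert hb; cases inA v <;> simp⟩
  · intro v hv
    rw [nbr v, Set.ncard_coe_finset]
    exact hdegA v hv
  · intro v hv
    rw [nbr v, Set.ncard_coe_finset]
    exact hdegB v hv
  · refine ⟨⟨fun v => P v, fun u v h => Pinj h,
      fun u v _ t => seg (P u) (P v) t.1, ?_, ?_, ?_, ?_, ?_, ?_, ?_⟩⟩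
    · intro u v h
      unfold seg
      fun_prop
    · intro u v h s t hst
      have hPQ : P u ≠ P v := fun c => h.1 (Pinj c)
      exact Subtype.ext (seg_inj hPQ hst)
    · intro u v h
      rw [show ((0 : unitInterval) : ℝ) = 0 from rfl, seg_zero]
    · intro u v h
      rw [show ((1 : unitInterval) : ℝ) = 1 from rfl, seg_one]
    · intro u v h t
      rw [show ((unitInterval.symm t : unitInterval) : ℝ) = 1 - t.1 from rfl, seg_flip]
    · -- arc_vertex
      rintro u v h t ⟨w, hw⟩
      have hPQ : P u ≠ P v := fun c => h.1 (Pinj c)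
      by_cases hwu : w = u
      · left
        apply Subtype.ext
        apply seg_inj hPQ
        have h2 : seg (P u) (P v) ((0 : unitInterval) : ℝ) = P w := by
          rw [show ((0 : unitInterval) : ℝ) = 0 from rfl, seg_zero, hwu]
        exact hw.trans h2.symm
      by_cases hwv : w = v
      · right
        apply Subtype.ext
        apply seg_inj hPQ
        have h2 : seg (P u) (P v) ((1 : unitInterval) : ℝ) = P w := by
          rw [show ((1 : unitInterval) : ℝ) = 1 from rfl, seg_one, hwv]
        exact hw.trans h2.symm
      · exfalso
        have hz : or3 (P u) (P v) (P w) ≠ 0 :=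
          zor_cast_ne (hgen (u, v) (adj_mem h) w hwu hwv)
        exact hz (by rw [← hw]; exact or3_seg_self _ _ _)
    · -- arc_disj
      intro u v x y h h' hne' t₁ t₂ heq
      have hm := adj_mem h
      have hm' := adj_mem h'
      have huv : u ≠ v := h.1
      have hxy : x ≠ y := h'.1
      by_cases hux : u = x
      · subst hux
        have hvy : v ≠ y := by rintro rfl; exact hne' rfl
        have hY : or3 (P u) (P v) (P y) ≠ 0 :=
          zor_cast_ne (hgen (u, v) hm y (Ne.symm hxy) (Ne.symm hvy))
        exact ⟨u, heq.trans (seg_meet heq (or3_self_left _ _) hY)⟩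
      by_cases huy : u = y
      · subst huy
        have hxv : x ≠ v := by rintro rfl; exact hne' (Sym2.eq_swap)
        have hX : or3 (P u) (P v) (P x) ≠ 0 :=
          zor_cast_ne (hgen (u, v) hm x hxy hxv)
        have heq' : seg (P u) (P v) t₁.1 = seg (P u) (P x) (1 - t₂.1) := by
          rw [seg_flip]; exact heq
        exact ⟨u, heq'.trans (seg_meet heq' (or3_self_left _ _) hX)⟩
      by_cases hvx : v = x
      · subst hvx
        have hyv : y ≠ v := Ne.symm hxy
        have hY : or3 (P u) (P v) (P y) ≠ 0 :=
          zor_cast_ne (hgen (u, v) hm y (Ne.symm huy) hyv)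
        exact ⟨v, heq.trans (seg_meet heq (or3_self_right _ _) hY)⟩
      by_cases hvy : v = y
      · subst hvy
        have hX : or3 (P u) (P v) (P x) ≠ 0 :=
          zor_cast_ne (hgen (u, v) hm x (Ne.symm hux) (Ne.symm hvx))
        have heq' : seg (P u) (P v) t₁.1 = seg (P v) (P x) (1 - t₂.1) := by
          rw [seg_flip]; exact heq
        exact ⟨v, heq'.trans (seg_meet heq' (or3_self_right _ _) hX)⟩
      · exfalso
        rcases hsep (u, v) hm (x, y) hm' hux huy hvx hvy with hs | hs
        · have h2 : or3 (P u) (P v) (seg (P x) (P y) t₂.1) ≠ 0 := by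
            rw [or3_seg]; exact comb_ne_zero t₂.2.1 t₂.2.2 (zor_cast_pos hs)
          exact h2 (by rw [← heq]; exact or3_seg_self _ _ _)
        · have h2 : or3 (P x) (P y) (seg (P u) (P v) t₁.1) ≠ 0 := by
            rw [or3_seg]; exact comb_ne_zero t₁.2.1 t₁.2.2 (zor_cast_pos hs)
          exact h2 (by rw [heq]; exact or3_seg_self _ _ _)

end Cert


def posG2 : Fin 14 → ℤ × ℤ := fun v => ([(2055, 2242), (-287, 1940), (-1961, 308), (660, 709), (-2124, 2137), (1195, 1605), (-716, 756), (-2062, -2124), (430, -2032), (2050, -243), (-750, -715), (2247, -2032), (-1239, -1487), (714, -726)] : List (ℤ × ℤ)).getD v.1 (0, 0)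

def edgesG2 : List (Fin 14 × Fin 14) := [(0, 4), (4, 0), (4, 7), (7, 4), (3, 6), (6, 3), (6, 10), (10, 6), (0, 5), (5, 0), (3, 5), (5, 3), (5, 1), (1, 5), (5, 9), (9, 5), (4, 1), (1, 4), (4, 2), (2, 4), (6, 1), (1, 6), (6, 2), (2, 6), (7, 11), (11, 7), (11, 0), (0, 11), (10, 13), (13, 10), (13, 3), (3, 13), (7, 12), (12, 7), (10, 12), (12, 10), (12, 8), (8, 12), (12, 2), (2, 12), (11, 8), (8, 11), (11, 9), (9, 11), (13, 8), (8, 13), (13, 9), (9, 13)]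

def inAG2 : Fin 14 → Bool := fun v => v.1 % 7 < 4


def posG3 : Fin 21 → ℤ × ℤ := fun v => ([(2589, 1596), (810, 1787), (-809, 1812), (827, 504), (6, 3013), (1628, 1164), (19, 1041), (-2578, 1455), (-2057, -288), (-1170, -1701), (-890, 533), (-2572, -1602), (-1732, 865), (-884, -504), (106, -3073), (1207, -1668), (2033, -255), (4, -922), (2611, -1444), (182, -2019), (844, -535)] : List (ℤ × ℤ)).getD v.1 (0, 0)

def edgesG3 : List (Fin 21 × Fin 21) := [(0, 4), (4, 0), (4, 7), (7, 4), (3, 6), (6, 3), (6, 10), (10, 6), (0, 5), (5, 0), (3, 5), (5, 3), (5, 1), (1, 5), (5, 16), (16, 5), (4, 1), (1, 4), (4, 2), (2, 4), (6, 1), (1, 6), (6, 2), (2, 6), (7, 11), (11, 7), (11, 14), (14, 11), (10, 13), (13, 10), (13, 17), (17, 13), (7, 12), (12, 7), (10, 12), (12, 10), (12, 8), (8, 12), (12, 2), (2, 12), (11, 8), (8, 11), (11, 9), (9, 11), (13, 8), (8, 13), (13, 9), (9, 13), (14, 18), (18, 14), (18, 0), (0, 18), (17, 20), (20, 17), (20,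 3), (3, 20), (14, 19), (19, 14), (17, 19), (19, 17), (19, 15), (15, 19), (19, 9), (9, 19), (18, 15), (15, 18), (18, 16), (16, 18), (20, 15), (15, 20), (20, 16), (16, 20)]

def inAG3 : Fin 21 → Bool := fun v => v.1 % 7 < 4

set_option maxRecDepth 1000000 in
set_option maxHeartbeats 4000000 in
lemma gadget2 : PlanarPair 3 8 4 6 :=
  cert_planarPair 3 4 8 6 posG2 edgesG2 inAG2
    (by decide) (by decide) (by decide) (by decide) (by decide) (by decide)
    (by decide) (by decide) (by decide) (by decide)

set_option maxRecDepth 1000000 in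
set_option maxHeartbeats 4000000 in
lemma gadget3 : PlanarPair 3 12 4 9 :=
  cert_planarPair 3 4 12 9 posG3 edgesG3 inAG3
    (by decide) (by decide) (by decide) (by decide) (by decide) (by decide)
    (by decide) (by decide) (by decide) (by decide)

section Union

open SimpleGraph

/-- translate a plane embedding. -/
def embShift {V : Type} {G : SimpleGraph V} (E : PlaneEmb G) (c : ℝ × ℝ) : PlaneEmb G where
  pos := fun v => E.pos v + c
  pos_inj := fun u v h => E.pos_inj (by exact add_right_cancel h)
  arc := fun u v h t => E.arc h t + c
  arc_cont := fun u v h => (E.arc_cont h).add continuous_const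
  arc_inj := fun u v h s t hst => E.arc_inj h (add_right_cancel hst)
  arc_zero := fun u v h => by rw [E.arc_zero h]
  arc_one := fun u v h => by rw [E.arc_one h]
  arc_symm := fun u v h t => by rw [E.arc_symm h t]
  arc_vertex := fun u v h t hw => by
    obtain ⟨w, hw⟩ := hw
    exact E.arc_vertex h t ⟨w, add_right_cancel hw⟩
  arc_disj := fun u v x y h h' hne t₁ t₂ heq => by
    obtain ⟨w, hw⟩ := E.arc_disj h h' hne t₁ t₂ (add_right_cancel heq)
    exact ⟨w, by rw [hw]⟩

/-- the image of a plane embedding of a finite graph is bounded. -/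
lemma embBounds {V : Type} [Finite V] {G : SimpleGraph V} (E : PlaneEmb G) :
    ∃ lo hi : ℝ, (∀ v, lo ≤ (E.pos v).1 ∧ (E.pos v).1 ≤ hi) ∧
      (∀ ⦃u v : V⦄ (h : G.Adj u v) (t : unitInterval), lo ≤ (E.arc h t).1 ∧ (E.arc h t).1 ≤ hi) := by
  classical
  set S : Set ℝ := (fun p : ℝ × ℝ => p.1) ''
    (Set.range E.pos ∪ ⋃ e : {p : V × V // G.Adj p.1 p.2}, Set.range (E.arc e.2)) with hS
  have hcomp : IsCompact S := by
    apply IsCompact.image _ continuous_fst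
    apply IsCompact.union
    · exact (Set.finite_range E.pos).isCompact
    · exact isCompact_iUnion fun e => isCompact_range (E.arc_cont e.2)
  have hmem1 : ∀ v, (E.pos v).1 ∈ S := fun v => ⟨E.pos v, Or.inl ⟨v, rfl⟩, rfl⟩
  have hmem2 : ∀ ⦃u v : V⦄ (h : G.Adj u v) (t : unitInterval), (E.arc h t).1 ∈ S :=
    fun u v h t => ⟨E.arc h t, Or.inr (Set.mem_iUnion.mpr ⟨⟨(u, v), h⟩, ⟨t, rfl⟩⟩), rfl⟩
  obtain ⟨hi, hhi⟩ := hcomp.bddAbove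
  obtain ⟨lo, hlo⟩ := hcomp.bddBelow
  exact ⟨lo, hi, fun v => ⟨hlo (hmem1 v), hhi (hmem1 v)⟩,
    fun u v h t => ⟨hlo (hmem2 h t), hhi (hmem2 h t)⟩⟩

variable {V₁ V₂ : Type} {G₁ : SimpleGraph V₁} {G₂ : SimpleGraph V₂}

/-- arcs for the disjoint union embedding. -/
def sumArc (E₁ : PlaneEmb G₁) (E₂ : PlaneEmb G₂) :
    ∀ ⦃a b : V₁ ⊕ V₂⦄, (G₁ ⊕g G₂).Adj a b → unitInterval → ℝ × ℝ
  | Sum.inl _, Sum.inl _, h, t => E₁.arc h t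
  | Sum.inr _, Sum.inr _, h, t => E₂.arc h t
  | Sum.inl _, Sum.inr _, h, _ => absurd h (by simp)
  | Sum.inr _, Sum.inl _, h, _ => absurd h (by simp)

lemma sum_nbhd_inl (v : V₁) :
    (G₁ ⊕g G₂).neighborSet (Sum.inl v) = Sum.inl '' G₁.neighborSet v := by
  ext (w | w) <;> simp

lemma sum_nbhd_inr (v : V₂) :
    (G₁ ⊕g G₂).neighborSet (Sum.inr v) = Sum.inr '' G₂.neighborSet v := by
  ext (w | w) <;> simp

/-- the disjoint union embedding, given horizontal separation. -/
def sumEmb (E₁ : PlaneEmb G₁) (E₂ : PlaneEmb G₂) (M : ℝ)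
    (h₁p : ∀ v, (E₁.pos v).1 ≤ M)
    (h₁a : ∀ ⦃u v : V₁⦄ (h : G₁.Adj u v) (t : unitInterval), (E₁.arc h t).1 ≤ M)
    (h₂p : ∀ v, M < (E₂.pos v).1)
    (h₂a : ∀ ⦃u v : V₂⦄ (h : G₂.Adj u v) (t : unitInterval), M < (E₂.arc h t).1) :
    PlaneEmb (G₁ ⊕g G₂) where
  pos := Sum.elim E₁.pos E₂.pos
  pos_inj := by
    rintro (u | u) (v | v) h
    · exact congrArg Sum.inl (E₁.pos_inj h)
    · exact absurd (congrArg Prod.fst h) (ne_of_lt (lt_of_le_of_lt (h₁p u) (h₂p v)))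
    · exact absurd (congrArg Prod.fst h) (ne_of_gt (lt_of_le_of_lt (h₁p v) (h₂p u)))
    · exact congrArg Sum.inr (E₂.pos_inj h)
  arc := sumArc E₁ E₂
  arc_cont := by
    rintro (u | u) (v | v) h
    · exact E₁.arc_cont h
    · exact absurd h (by simp)
    · exact absurd h (by simp)
    · exact E₂.arc_cont h
  arc_inj := by
    rintro (u | u) (v | v) h
    · exact E₁.arc_inj h
    · exact absurd h (by simp)
    · exact absurd h (by simp)
    · exact E₂.arc_inj h
  arc_zero := by
    rintro (u | u) (v | v) h
    · exact E₁.arc_zero h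
    · exact absurd h (by simp)
    · exact absurd h (by simp)
    · exact E₂.arc_zero h
  arc_one := by
    rintro (u | u) (v | v) h
    · exact E₁.arc_one h
    · exact absurd h (by simp)
    · exact absurd h (by simp)
    · exact E₂.arc_one h
  arc_symm := by
    rintro (u | u) (v | v) h t
    · exact E₁.arc_symm h t
    · exact absurd h (by simp)
    · exact absurd h (by simp)
    · exact E₂.arc_symm h t
  arc_vertex := by
    rintro (u | u) (v | v) h t hw
    · obtain ⟨(w | w), hw⟩ := hw
      · exact E₁.arc_vertex h t ⟨w, hw⟩
      · exact absurd (congrArg Prod.fst hw) (ne_of_lt (lt_of_le_of_lt (h₁a h t) (h₂p w)))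
    · exact absurd h (by simp)
    · exact absurd h (by simp)
    · obtain ⟨(w | w), hw⟩ := hw
      · exact absurd (congrArg Prod.fst hw) (ne_of_gt (lt_of_le_of_lt (h₁p w) (h₂a h t)))
      · exact E₂.arc_vertex h t ⟨w, hw⟩
  arc_disj := by
    rintro (u | u) (v | v) (x | x) (y | y) h h' hne t₁ t₂ heq
    · -- inl inl inl inl
      have hne' : s(u, v) ≠ s(x, y) := by
        intro hs
        exact hne (by rw [← Sym2.map_pair_eq Sum.inl u v, ← Sym2.map_pair_eq Sum.inl x y, hs])
      obtain ⟨w, hw⟩ := E₁.arc_disj h h' hne' t₁ t₂ heq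
      exact ⟨Sum.inl w, hw⟩
    · exact absurd h' (by simp)
    · exact absurd h' (by simp)
    · exact absurd (congrArg Prod.fst heq) (ne_of_lt (lt_of_le_of_lt (h₁a h t₁) (h₂a h' t₂)))
    · exact absurd h (by simp)
    · exact absurd h (by simp)
    · exact absurd h (by simp)
    · exact absurd h (by simp)
    · exact absurd h (by simp)
    · exact absurd h (by simp)
    · exact absurd h (by simp)
    · exact absurd h (by simp)
    · exact absurd (congrArg Prod.fst heq) (ne_of_gt (lt_of_le_of_lt (h₁a h' t₂) (h₂a h t₁)))
    · exact absurd h' (by simp)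
    · exact absurd h' (by simp)
    · -- inr inr inr inr
      have hne' : s(u, v) ≠ s(x, y) := by
        intro hs
        exact hne (by rw [← Sym2.map_pair_eq Sum.inr u v, ← Sym2.map_pair_eq Sum.inr x y, hs])
      obtain ⟨w, hw⟩ := E₂.arc_disj h h' hne' t₁ t₂ heq
      exact ⟨Sum.inr w, hw⟩

/-- disjoint unions of planar pairs. -/
theorem planarPair_add {a b p q p' q' : ℕ}
    (h1 : PlanarPair a p b q) (h2 : PlanarPair a p' b q') :
    PlanarPair a (p + p') b (q + q') := by
  obtain ⟨V₁, hF₁, G₁, A₁, B₁, hd₁, hu₁, hp₁, hq₁, hbip₁, hA₁, hB₁, ⟨E₁⟩⟩ := h1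
  obtain ⟨V₂, hF₂, G₂, A₂, B₂, hd₂, hu₂, hp₂, hq₂, hbip₂, hA₂, hB₂, ⟨E₂⟩⟩ := h2
  haveI := hF₁; haveI := hF₂
  obtain ⟨lo₁, hi₁, hb₁p, hb₁a⟩ := embBounds E₁
  obtain ⟨lo₂, hi₂, hb₂p, hb₂a⟩ := embBounds E₂
  set c : ℝ := hi₁ - lo₂ + 1 with hc
  set E₂' := embShift E₂ (c, 0) with hE₂'
  have hdisj : ∀ (S : Set V₁) (T : Set V₂), Disjoint (Sum.inl '' S) (Sum.inr '' T) := by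
    intro S T
    rw [Set.disjoint_left]
    rintro z ⟨w, -, rfl⟩ ⟨w', -, hw'⟩
    exact nomatch hw'
  refine ⟨V₁ ⊕ V₂, inferInstance, G₁ ⊕g G₂,
    Sum.inl '' A₁ ∪ Sum.inr '' A₂, Sum.inl '' B₁ ∪ Sum.inr '' B₂, ?_, ?_, ?_, ?_, ?_, ?_, ?_, ?_⟩
  · -- disjoint
    rw [Set.disjoint_left]
    rintro z (⟨w, hw, rfl⟩ | ⟨w, hw, rfl⟩) hz
    · rcases hz with ⟨w', hw', hwe⟩ | ⟨w', hw', hwe⟩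
      · rw [Sum.inl.injEq] at hwe; subst hwe
        exact Set.disjoint_left.mp hd₁ hw hw'
      · exact nomatch hwe
    · rcases hz with ⟨w', hw', hwe⟩ | ⟨w', hw', hwe⟩
      · exact nomatch hwe
      · rw [Sum.inr.injEq] at hwe; subst hwe
        exact Set.disjoint_left.mp hd₂ hw hw'
  · -- union is univ
    apply Set.eq_univ_of_forall
    rintro (v | v)
    · have hv : v ∈ A₁ ∪ B₁ := by rw [hu₁]; trivial
      rcases hv with h | h
      · exact Set.mem_union_left _ (Set.mem_union_left _ (Set.mem_image_of_mem _ h))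
      · exact Set.mem_union_right _ (Set.mem_union_left _ (Set.mem_image_of_mem _ h))
    · have hv : v ∈ A₂ ∪ B₂ := by rw [hu₂]; trivial
      rcases hv with h | h
      · exact Set.mem_union_left _ (Set.mem_union_right _ (Set.mem_image_of_mem _ h))
      · exact Set.mem_union_right _ (Set.mem_union_right _ (Set.mem_image_of_mem _ h))
  · rw [Set.ncard_union_eq (hdisj A₁ A₂) (Set.toFinite _) (Set.toFinite _),
      Set.ncard_image_of_injective _ Sum.inl_injective,
      Set.ncard_image_of_injective _ Sum.inr_injective, hp₁, hp₂]
  · rw [Set.ncard_union_eq (hdisj B₁ B₂) (Set.toFinite _) (Set.toFinite _),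
      Set.ncard_image_of_injective _ Sum.inl_injective,
      Set.ncard_image_of_injective _ Sum.inr_injective, hq₁, hq₂]
  · -- bipartite
    rintro (u | u) (v | v) h
    · rcases hbip₁ (by simpa using h) with ⟨hu, hv⟩ | ⟨hu, hv⟩
      · exact Or.inl ⟨Set.mem_union_left _ (Set.mem_image_of_mem _ hu),
          Set.mem_union_left _ (Set.mem_image_of_mem _ hv)⟩
      · exact Or.inr ⟨Set.mem_union_left _ (Set.mem_image_of_mem _ hu),
          Set.mem_union_left _ (Set.mem_image_of_mem _ hv)⟩
    · exact absurd h (by simp)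
    · exact absurd h (by simp)
    · rcases hbip₂ (by simpa using h) with ⟨hu, hv⟩ | ⟨hu, hv⟩
      · exact Or.inl ⟨Set.mem_union_right _ (Set.mem_image_of_mem _ hu),
          Set.mem_union_right _ (Set.mem_image_of_mem _ hv)⟩
      · exact Or.inr ⟨Set.mem_union_right _ (Set.mem_image_of_mem _ hu),
          Set.mem_union_right _ (Set.mem_image_of_mem _ hv)⟩
  · -- degrees in A
    rintro (v | v) hv
    · have hv₁ : v ∈ A₁ := by
        rcases hv with ⟨w, hw, hwe⟩ | ⟨w, hw, hwe⟩
        · rw [Sum.inl.injEq] at hwe; subst hwe; exact hw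
        · exact nomatch hwe
      rw [sum_nbhd_inl, Set.ncard_image_of_injective _ Sum.inl_injective]
      exact hA₁ v hv₁
    · have hv₂ : v ∈ A₂ := by
        rcases hv with ⟨w, hw, hwe⟩ | ⟨w, hw, hwe⟩
        · exact nomatch hwe
        · rw [Sum.inr.injEq] at hwe; subst hwe; exact hw
      rw [sum_nbhd_inr, Set.ncard_image_of_injective _ Sum.inr_injective]
      exact hA₂ v hv₂
  · -- degrees in B
    rintro (v | v) hv
    · have hv₁ : v ∈ B₁ := by
        rcases hv with ⟨w, hw, hwe⟩ | ⟨w, hw, hwe⟩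
        · rw [Sum.inl.injEq] at hwe; subst hwe; exact hw
        · exact nomatch hwe
      rw [sum_nbhd_inl, Set.ncard_image_of_injective _ Sum.inl_injective]
      exact hB₁ v hv₁
    · have hv₂ : v ∈ B₂ := by
        rcases hv with ⟨w, hw, hwe⟩ | ⟨w, hw, hwe⟩
        · exact nomatch hwe
        · rw [Sum.inr.injEq] at hwe; subst hwe; exact hw
      rw [sum_nbhd_inr, Set.ncard_image_of_injective _ Sum.inr_injective]
      exact hB₂ v hv₂
  · -- plane embedding
    refine ⟨sumEmb E₁ E₂' hi₁ (fun v => (hb₁p v).2) (fun u v h t => (hb₁a h t).2) ?_ ?_⟩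
    · intro v
      have h1 : (E₂'.pos v).1 = (E₂.pos v).1 + c := rfl
      have h2 := (hb₂p v).1
      rw [h1, hc]; linarith
    · intro u v h t
      have h1 : (E₂'.arc h t).1 = (E₂.arc h t).1 + c := rfl
      have h2 := (hb₂a h t).1
      rw [h1, hc]; linarith

end Union

end PlanarAux

theorem planar_three_four (r : ℕ) (hr : 2 ≤ r) :
    PlanarPair 3 (4 * r) 4 (3 * r) := by
  have key : ∀ r : ℕ, 2 ≤ r → PlanarPair 3 (4 * r) 4 (3 * r) := by
    intro r
    induction r using Nat.strong_induction_on with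
    | _ r ih =>
      intro hr
      rcases lt_or_ge r 4 with h4 | h4
      · interval_cases r
        · exact PlanarAux.gadget2
        · exact PlanarAux.gadget3
      · have h1 := ih (r - 2) (by omega) (by omega)
        have h2 := PlanarAux.planarPair_add h1 PlanarAux.gadget2
        have e1 : 4 * r = 4 * (r - 2) + 8 := by omega
        have e2 : 3 * r = 3 * (r - 2) + 6 := by omega
        rw [e1, e2]; exact h2
  exact key r hr
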